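/- Let P = (P_{i,i}, P_{i,-i})_{i∈N} be a lexicographic preference profile and P^ind := (P_{i,i}, P^ind_{i,-i})_{i∈N} the profile with the same private components and individualistic social components. Then P^ind ⊵ P, i.e., the individualistic profile is weakly more Pareto-favorable than P. -/

import Mathlib

/-- The set of admissible allocations: each individual gets one and only one
widget, and no widget is assigned twice. -/
abbrev Alloc (N M : Type*) := {x : N → M // Function.Injective x}

/-- `x_{-i}`: the restriction of an allocation `x` to `N \ {i}`. -/
def restr {N M : Type*} (i : N) (x : Alloc N M) : {j : N // j ≠ i} → M :=
  fun j => x.1 j.1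

/-- `X_{-i}`: the set of restrictions of admissible allocations to `N \ {i}`. -/
def Xminus (N M : Type*) (i : N) : Set ({j : N // j ≠ i} → M) :=
  {f | ∃ x : Alloc N M, f = restr i x}

/-- A lexicographic preference profile: each individual `i` has a private
component `priv i`, a strict linear order on the widgets `M`, and a social
component `soc i`, a total preorder on `X_{-i}`. -/
structure LexProfile (N M : Type*) where
  priv : N → M → M → Prop
  priv_irrefl : ∀ i x, ¬ priv i x x
  priv_trans : ∀ i x y z, priv i x y → priv i y z → priv i x z
  priv_total : ∀ i x y, x ≠ y → priv i x y ∨ priv i y x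
  soc : (i : N) → ({j : N // j ≠ i} → M) → ({j : N // j ≠ i} → M) → Prop
  soc_refl : ∀ i, ∀ f ∈ Xminus N M i, soc i f f
  soc_trans : ∀ i, ∀ f ∈ Xminus N M i, ∀ g ∈ Xminus N M i, ∀ h ∈ Xminus N M i,
    soc i f g → soc i g h → soc i f h
  soc_total : ∀ i, ∀ f ∈ Xminus N M i, ∀ g ∈ Xminus N M i, soc i f g ∨ soc i g f

namespace LexProfile

variable {N M : Type*}

/-- Strict part of the social component. -/
def sSoc (P : LexProfile N M) (i : N) (f g : {j : N // j ≠ i} → M) : Prop :=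
  P.soc i f g ∧ ¬ P.soc i g f

/-- Induced strict preference on allocations: `x ≻_{P_i} y` iff
`x_i ≻_{P_{i,i}} y_i`, or `x_i = y_i` and `x_{-i} ≻_{P_{i,-i}} y_{-i}`. -/
def sPref (P : LexProfile N M) (i : N) (x y : Alloc N M) : Prop :=
  P.priv i (x.1 i) (y.1 i) ∨ (x.1 i = y.1 i ∧ P.sSoc i (restr i x) (restr i y))

/-- Induced weak preference on allocations. -/
def wPref (P : LexProfile N M) (i : N) (x y : Alloc N M) : Prop :=
  P.priv i (x.1 i) (y.1 i) ∨ (x.1 i = y.1 i ∧ P.soc i (restr i x) (restr i y))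

/-- The ranking `R(P_i, x) = 1 + #{z ∈ X : z ≻_{P_i} x}`. -/
noncomputable def rank (P : LexProfile N M) (i : N) (x : Alloc N M) : ℕ :=
  1 + {z : Alloc N M | P.sPref i z x}.ncard

/-- The set of Pareto efficient allocations. -/
def PE (P : LexProfile N M) : Set (Alloc N M) :=
  {x | ¬ ∃ z : Alloc N M, (∀ i, P.wPref i z x) ∧ (∃ j, P.sPref j z x)}

/-- `P ⊵ P'`: there is a surjection `ψ` from `PE(P')` onto `PE(P)` weakly
improving all ranking vectors. -/
def Dom (P P' : LexProfile N M) : Prop :=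
  ∃ ψ : Alloc N M → Alloc N M, Set.MapsTo ψ P'.PE P.PE ∧ Set.SurjOn ψ P'.PE P.PE ∧
    ∀ x ∈ P'.PE, ∀ i, P.rank i (ψ x) ≤ P'.rank i x

/-- `P^ind`: the profile with the same private components as `P` and
individualistic social components (complete indifference over others' widgets). -/
def ind (P : LexProfile N M) : LexProfile N M where
  priv := P.priv
  priv_irrefl := P.priv_irrefl
  priv_trans := P.priv_trans
  priv_total := P.priv_total
  soc := fun _ _ _ => True
  soc_refl := by intros; trivial
  soc_trans := by intros; trivial
  soc_total := by intros; left; trivial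

end LexProfile

section Aux

variable {N M : Type*} [Fintype N] [Fintype M] (P : LexProfile N M)

lemma ind_sPref_iff (i : N) (z x : Alloc N M) :
    P.ind.sPref i z x ↔ P.priv i (z.1 i) (x.1 i) := by
  unfold LexProfile.sPref LexProfile.sSoc LexProfile.ind
  simp

lemma ind_wPref_iff (i : N) (z x : Alloc N M) :
    P.ind.wPref i z x ↔ (P.priv i (z.1 i) (x.1 i) ∨ z.1 i = x.1 i) := by
  unfold LexProfile.wPref LexProfile.ind
  simp

lemma ind_rank_mono {i : N} {z x : Alloc N M}
    (h : P.priv i (z.1 i) (x.1 i) ∨ z.1 i = x.1 i) :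
    P.ind.rank i z ≤ P.ind.rank i x := by
  unfold LexProfile.rank
  apply Nat.add_le_add_left
  apply Set.ncard_le_ncard _ (Set.toFinite _)
  intro w hw
  simp only [Set.mem_setOf_eq, ind_sPref_iff] at hw ⊢
  rcases h with h | h
  · exact P.priv_trans i _ _ _ hw h
  · rwa [h] at hw

lemma ind_rank_strict {j : N} {z x : Alloc N M}
    (h : P.priv j (z.1 j) (x.1 j)) :
    P.ind.rank j z < P.ind.rank j x := by
  unfold LexProfile.rank
  apply Nat.add_lt_add_left
  apply Set.ncard_lt_ncard _ (Set.toFinite _)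
  constructor
  · intro w hw
    simp only [Set.mem_setOf_eq, ind_sPref_iff] at hw ⊢
    exact P.priv_trans j _ _ _ hw h
  · intro hsub
    have hz : z ∈ {w : Alloc N M | P.ind.sPref j w x} := by
      simp only [Set.mem_setOf_eq, ind_sPref_iff]; exact h
    have := hsub hz
    simp only [Set.mem_setOf_eq, ind_sPref_iff] at this
    exact P.priv_irrefl j _ this

lemma ind_rank_le (i : N) (x : Alloc N M) : P.ind.rank i x ≤ P.rank i x := by
  unfold LexProfile.rank
  apply Nat.add_le_add_left
  apply Set.ncard_le_ncard _ (Set.toFinite _)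
  intro w hw
  simp only [Set.mem_setOf_eq, ind_sPref_iff] at hw
  simp only [Set.mem_setOf_eq, LexProfile.sPref]
  exact Or.inl hw

lemma pe_ind_subset : P.ind.PE ⊆ P.PE := by
  intro x hx
  simp only [LexProfile.PE, Set.mem_setOf_eq] at hx ⊢
  intro hcon
  obtain ⟨z, hzw, j, hzs⟩ := hcon
  apply hx
  refine ⟨z, fun i => ?_, ?_⟩
  · rcases hzw i with h | ⟨h, _⟩
    · exact (ind_wPref_iff P i z x).2 (Or.inl h)
    · exact (ind_wPref_iff P i z x).2 (Or.inr h)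
  · by_cases hne : ∃ k, z.1 k ≠ x.1 k
    · obtain ⟨k, hk⟩ := hne
      rcases hzw k with h | ⟨h, _⟩
      · exact ⟨k, (ind_sPref_iff P k z x).2 h⟩
      · exact absurd h hk
    · push_neg at hne
      exfalso
      have hz : z = x := Subtype.ext (funext hne)
      subst hz
      rcases hzs with h | ⟨_, hs, hs'⟩
      · exact P.priv_irrefl j _ h
      · exact hs' hs

lemma exists_pe_ind (x : Alloc N M) :
    ∃ z ∈ P.ind.PE, ∀ i, P.priv i (z.1 i) (x.1 i) ∨ z.1 i = x.1 i := by
  suffices h : ∀ n (x : Alloc N M), (∑ i, P.ind.rank i x) < n →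
      ∃ z ∈ P.ind.PE, ∀ i, P.priv i (z.1 i) (x.1 i) ∨ z.1 i = x.1 i by
    exact h ((∑ i, P.ind.rank i x) + 1) x (by omega)
  intro n
  induction n with
  | zero => intro x hx; omega
  | succ n ih =>
    intro x hx
    by_cases hpe : x ∈ P.ind.PE
    · exact ⟨x, hpe, fun i => Or.inr rfl⟩
    · simp only [LexProfile.PE, Set.mem_setOf_eq, not_not] at hpe
      obtain ⟨z, hzw, j, hzs⟩ := hpe
      have hw : ∀ i, P.priv i (z.1 i) (x.1 i) ∨ z.1 i = x.1 i :=
        fun i => (ind_wPref_iff P i z x).1 (hzw i)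
      have hs : P.priv j (z.1 j) (x.1 j) := (ind_sPref_iff P j z x).1 hzs
      have hlt : ∑ i, P.ind.rank i z < ∑ i, P.ind.rank i x :=
        Finset.sum_lt_sum (fun i _ => ind_rank_mono P (hw i))
          ⟨j, Finset.mem_univ j, ind_rank_strict P hs⟩
      obtain ⟨w, hwpe, hww⟩ := ih z (by omega)
      refine ⟨w, hwpe, fun i => ?_⟩
      rcases hww i with h1 | h1 <;> rcases hw i with h2 | h2
      · exact Or.inl (P.priv_trans i _ _ _ h1 h2)
      · exact Or.inl (h2 ▸ h1)
      · exact Or.inl (h1 ▸ h2)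
      · exact Or.inr (h1.trans h2)

end Aux

/-- the individualistic profile is weakly more Pareto-favorable:
`P^ind ⊵ P`. -/
theorem stmt_14 {N M : Type*} [Fintype N] [Fintype M]
    (hNM : Fintype.card N ≤ Fintype.card M) (P : LexProfile N M) :
    P.ind.Dom P := by
  classical
  refine ⟨fun x => if x ∈ P.ind.PE then x else Classical.choose (exists_pe_ind P x),
    ?_, ?_, ?_⟩
  · intro x _
    by_cases hx : x ∈ P.ind.PE
    · simpa [hx] using hx
    · simpa [hx] using (Classical.choose_spec (exists_pe_ind P x)).1
  · intro y hy
    exact ⟨y, pe_ind_subset P hy, by simp [hy]⟩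
  · intro x _ i
    by_cases hx : x ∈ P.ind.PE
    · simpa [hx] using ind_rank_le P i x
    · simp only [hx, if_false]
      calc P.ind.rank i (Classical.choose (exists_pe_ind P x))
          ≤ P.ind.rank i x :=
            ind_rank_mono P ((Classical.choose_spec (exists_pe_ind P x)).2 i)
        _ ≤ P.rank i x := ind_rank_le P i x
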